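/- Let p > 0 and s > 1. Then the polynomial spiral S_p is a (1/s)-Hölder arc, i.e., there exist a homeomorphism f from [0,1] onto S_p and H > 0 with |f(x) − f(y)| ≤ H|x − y|^{1/s} for all x, y ∈ [0,1], if and only if ps > 1. -/

import Mathlib

open scoped ENNReal

/-- The parametrizing map `t ↦ φ(t) e^{it}` of a spiral. -/
noncomputable def spiralMap (φ : ℝ → ℝ) : ℝ → ℂ :=
  fun t => (φ t : ℂ) * Complex.exp (t * Complex.I)

/-- The spiral `S_φ = {φ(t) e^{it} : t ∈ [2π, ∞)} ∪ {0}`. -/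
noncomputable def spiral (φ : ℝ → ℝ) : Set ℂ :=
  spiralMap φ '' Set.Ici (2 * Real.pi) ∪ {0}

/-- `φ_j = max{φ(t) : t ∈ [2πj, 2π(j+1)]}`. -/
noncomputable def phiMax (φ : ℝ → ℝ) (j : ℕ) : ℝ :=
  sSup (φ '' Set.Icc (2 * Real.pi * j) (2 * Real.pi * (j + 1)))

/-- `S_φ` is a spiral arc: the map `t ↦ φ(t) e^{it}` is injective on `[2π, ∞)`. -/
def IsSpiralArc (φ : ℝ → ℝ) : Prop :=
  Set.InjOn (spiralMap φ) (Set.Ici (2 * Real.pi))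

/-- `S_φ` is almost circular with constant `C`: the length of each full turn `S_φ^j`
(the total variation of `spiralMap φ` over `[2πj, 2π(j+1)]`) is at most `C * φ_j`. -/
def IsAlmostCircularWith (φ : ℝ → ℝ) (C : ℝ) : Prop :=
  ∀ j : ℕ, 1 ≤ j →
    eVariationOn (spiralMap φ) (Set.Icc (2 * Real.pi * j) (2 * Real.pi * (j + 1)))
      ≤ ENNReal.ofReal (C * phiMax φ j)

/-- `S` is an `α`-Hölder arc: there is a homeomorphism `f` from `[0,1]` onto `S`
(equivalently, a continuous injective surjection from the compact set `[0,1]`)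
and `H > 0` with `|f x - f y| ≤ H |x - y| ^ α`. -/
def IsHolderArc (S : Set ℂ) (α : ℝ) : Prop :=
  ∃ f : ℝ → ℂ, Set.InjOn f (Set.Icc 0 1) ∧ f '' Set.Icc 0 1 = S ∧
    ∃ H > 0, ∀ x ∈ Set.Icc (0:ℝ) 1, ∀ y ∈ Set.Icc (0:ℝ) 1,
      ‖f x - f y‖ ≤ H * |x - y| ^ α

/-- The polynomial spiral `S_p = {t^{-p} e^{it} : t ∈ [2π, ∞)} ∪ {0}`. -/
noncomputable def polySpiral (p : ℝ) : Set ℂ :=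
  spiral (fun t => t ^ (-p))

section Aux

open Real Set Filter

/-- modulus of a point of the spiral map -/
lemma PSaux.abs_spiralMap (p : ℝ) (t : ℝ) :
    ‖spiralMap (fun t => t ^ (-p)) t‖ = t ^ (-p) ∨ t < 0 := by
  rcases lt_or_ge t 0 with h | h
  · exact Or.inr h
  · left
    simp only [spiralMap, norm_mul, Complex.norm_real, Real.norm_eq_abs, Complex.norm_exp_ofReal_mul_I, mul_one]
    exact abs_of_nonneg (Real.rpow_nonneg h _)

lemma PSaux.abs_spiralMap' (p : ℝ) {t : ℝ} (ht : 0 ≤ t) :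
    ‖spiralMap (fun t => t ^ (-p)) t‖ = t ^ (-p) := by
  rcases PSaux.abs_spiralMap p t with h | h
  · exact h
  · linarith

/-- chord estimate: `|e^{ia} - e^{ib}| ≤ 2|a - b|`. -/
lemma PSaux.chord_le (a b : ℝ) :
    ‖Complex.exp (a * Complex.I) - Complex.exp (b * Complex.I)‖ ≤ 2 * |a - b| := by
  have key : Complex.exp (a * Complex.I) - Complex.exp (b * Complex.I)
      = Complex.exp (b * Complex.I) * (Complex.exp (((a - b : ℝ) : ℂ) * Complex.I) - 1) := by
    rw [mul_sub, ← Complex.exp_add, mul_one]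
    push_cast
    ring_nf
  rw [key, norm_mul, Complex.norm_exp_ofReal_mul_I, one_mul]
  have habs : ‖((a - b : ℝ) : ℂ) * Complex.I‖ = |a - b| := by
    rw [norm_mul, Complex.norm_I, mul_one, Complex.norm_real, Real.norm_eq_abs]
  rcases le_or_gt (|a - b|) 1 with h | h
  · have := Complex.norm_exp_sub_one_le (x := ((a - b : ℝ) : ℂ) * Complex.I) (by rw [habs]; exact h)
    rwa [habs] at this
  · calc ‖Complex.exp (((a - b : ℝ) : ℂ) * Complex.I) - 1‖
        ≤ ‖Complex.exp (((a - b : ℝ) : ℂ) * Complex.I)‖ + ‖(1:ℂ)‖ :=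
          (norm_sub_le _ _)
      _ = 2 := by rw [Complex.norm_exp_ofReal_mul_I]; norm_num
      _ ≤ 2 * |a - b| := by nlinarith

/-- trivial chord bound `≤ 2`. -/
lemma PSaux.chord_le_two (a b : ℝ) :
    ‖Complex.exp (a * Complex.I) - Complex.exp (b * Complex.I)‖ ≤ 2 := by
  calc ‖Complex.exp (a * Complex.I) - Complex.exp (b * Complex.I)‖
      ≤ ‖Complex.exp (a * Complex.I)‖ + ‖Complex.exp (b * Complex.I)‖ :=
        norm_sub_le _ _
    _ = 2 := by rw [Complex.norm_exp_ofReal_mul_I, Complex.norm_exp_ofReal_mul_I]; norm_num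

/-- Mean value theorem for rpow. -/
lemma PSaux.rpow_mvt {x y c : ℝ} (hx : 0 < x) (hxy : x < y) :
    ∃ ξ ∈ Set.Ioo x y, y ^ c - x ^ c = c * ξ ^ (c - 1) * (y - x) := by
  have hcont : ContinuousOn (fun t : ℝ => t ^ c) (Set.Icc x y) := by
    intro t ht
    exact (Real.continuousAt_rpow_const t c (Or.inl (by nlinarith [ht.1] : t ≠ 0))).continuousWithinAt
  have hderiv : ∀ t ∈ Set.Ioo x y, HasDerivAt (fun t : ℝ => t ^ c) (c * t ^ (c - 1)) t := by
    intro t ht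
    exact Real.hasDerivAt_rpow_const (Or.inl (by nlinarith [ht.1] : t ≠ 0))
  obtain ⟨ξ, hξ, hsl⟩ := exists_hasDerivAt_eq_slope (fun t : ℝ => t ^ c)
    (fun t => c * t ^ (c - 1)) hxy hcont hderiv
  refine ⟨ξ, hξ, ?_⟩
  rw [eq_div_iff (ne_of_gt (sub_pos.mpr hxy))] at hsl
  linarith [hsl]

end Aux

section Reverse

open Real Set

set_option maxHeartbeats 1000000 in
lemma PSaux.holder_of_ps (p s : ℝ) (hp : 0 < p) (hs : 1 < s) (hps : 1 < p * s) :
    IsHolderArc (polySpiral p) (1 / s) := by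
  have hs0 : (0:ℝ) < s := lt_trans one_pos hs
  set α : ℝ := 1 / s with hαdef
  have hα0 : 0 < α := by positivity
  have hα1 : α < 1 := by rw [hαdef, div_lt_one hs0]; exact hs
  have hαp : α < p := by
    rw [hαdef, div_lt_iff₀ hs0]; linarith
  set β : ℝ := α / (p - α) with hβdef
  have hβ0 : 0 < β := div_pos hα0 (by linarith)
  set c : ℝ := p * β with hcdef
  have hc0 : 0 < c := mul_pos hp hβ0
  have hc : c = α * (β + 1) := by
    have hne : p - α ≠ 0 := ne_of_gt (by linarith)
    rw [hcdef, hβdef]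
    field_simp
    ring
  have hαc : α ≤ c := by nlinarith
  have hπ : (0:ℝ) < 2 * π := by positivity
  set A : ℝ := (2 * π) ^ (-p) with hAdef
  have hA0 : 0 < A := Real.rpow_pos_of_pos hπ _
  -- the parametrization
  set f : ℝ → ℂ := fun x => spiralMap (fun t => t ^ (-p)) (2 * π * x ^ (-β)) with hfdef
  set T : ℝ → ℝ := fun x => 2 * π * x ^ (-β) with hTdef
  have hT_pos : ∀ x : ℝ, 0 < x → 0 < T x := fun x hx =>
    mul_pos hπ (Real.rpow_pos_of_pos hx _)
  have hradius : ∀ x : ℝ, 0 < x → (T x) ^ (-p) = A * x ^ c := by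
    intro x hx
    rw [hTdef]
    simp only
    rw [Real.mul_rpow (le_of_lt hπ) (Real.rpow_nonneg hx.le _), ← Real.rpow_mul hx.le]
    rw [hAdef]
    congr 1
    rw [hcdef]; ring
  have hf_eq : ∀ x : ℝ, 0 < x →
      f x = ((A * x ^ c : ℝ) : ℂ) * Complex.exp ((T x : ℝ) * Complex.I) := by
    intro x hx
    rw [hfdef]
    simp only [spiralMap]
    rw [← hradius x hx]
  have hf0 : f 0 = 0 := by
    rw [hfdef]
    simp only [spiralMap]
    rw [Real.zero_rpow (by intro h; exact absurd (neg_eq_zero.mp h) (ne_of_gt hβ0)), mul_zero,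
      Real.zero_rpow (by intro h; exact absurd (neg_eq_zero.mp h) (ne_of_gt hp))]
    simp
  have habs : ∀ x : ℝ, 0 < x → ‖f x‖ = A * x ^ c := by
    intro x hx
    rw [hf_eq x hx, norm_mul, Complex.norm_real, Real.norm_eq_abs, Complex.norm_exp_ofReal_mul_I, mul_one]
    exact abs_of_nonneg (by positivity)
  have hT_ge : ∀ x : ℝ, 0 < x → x ≤ 1 → 2 * π ≤ T x := by
    intro x hx hx1
    rw [hTdef]
    simp only
    nlinarith [Real.one_le_rpow_of_pos_of_le_one_of_nonpos hx hx1 (neg_nonpos.mpr hβ0.le)]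
  refine ⟨f, ?_, ?_, ?_⟩
  · -- injectivity
    intro x hx y hy hxy
    rcases eq_or_lt_of_le hx.1 with h0x | h0x
    · rcases eq_or_lt_of_le hy.1 with h0y | h0y
      · rw [← h0x, ← h0y]
      · exfalso
        have h1 : ‖f x‖ = 0 := by rw [← h0x, hf0]; simp
        have h2 : ‖f y‖ = A * y ^ c := habs y h0y
        rw [hxy, h2] at h1
        have : 0 < A * y ^ c := mul_pos hA0 (Real.rpow_pos_of_pos h0y _)
        linarith
    · rcases eq_or_lt_of_le hy.1 with h0y | h0y
      · exfalso
        have h1 : ‖f y‖ = 0 := by rw [← h0y, hf0]; simp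
        have h2 : ‖f x‖ = A * x ^ c := habs x h0x
        rw [← hxy, h2] at h1
        have : 0 < A * x ^ c := mul_pos hA0 (Real.rpow_pos_of_pos h0x _)
        linarith
      · have h1 : A * x ^ c = A * y ^ c := by
          rw [← habs x h0x, ← habs y h0y, hxy]
        have h2 : x ^ c = y ^ c := by
          exact mul_left_cancel₀ (ne_of_gt hA0) h1
        have := congrArg (fun u : ℝ => u ^ c⁻¹) h2
        simpa [Real.rpow_rpow_inv h0x.le (ne_of_gt hc0),
          Real.rpow_rpow_inv h0y.le (ne_of_gt hc0)] using this
  · -- image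
    apply Set.Subset.antisymm
    · rintro z ⟨x, hx, rfl⟩
      rcases eq_or_lt_of_le hx.1 with h0x | h0x
      · right
        rw [← h0x, hf0]; rfl
      · left
        exact ⟨T x, hT_ge x h0x hx.2, rfl⟩
    · rintro z (⟨t, ht, rfl⟩ | hz)
      · have ht0 : 0 < t := lt_of_lt_of_le hπ ht
        refine ⟨(2 * π / t) ^ β⁻¹, ⟨?_, ?_⟩, ?_⟩
        · positivity
        · apply Real.rpow_le_one (by positivity) _ (by positivity)
          rw [div_le_one ht0]; exact ht
        · rw [hfdef]
          simp only
          have h1 : ((2 * π / t) ^ β⁻¹ : ℝ) ^ (-β) = (2 * π / t)⁻¹ := by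
            rw [← Real.rpow_mul (by positivity : (0:ℝ) ≤ 2 * π / t)]
            rw [show β⁻¹ * (-β) = -1 by field_simp, Real.rpow_neg_one]
          rw [h1]
          congr 2
          field_simp
      · rw [Set.mem_singleton_iff] at hz
        rw [hz]
        exact ⟨0, ⟨le_refl 0, zero_le_one⟩, hf0⟩
  · -- Hölder estimate
    set M : ℝ := A * (2 ^ (c:ℝ) + c + 2 + 4 * π * β) + 1 with hMdef
    have h2c : (1:ℝ) ≤ 2 ^ (c:ℝ) := Real.one_le_rpow one_le_two hc0.le
    have hπpos : (0:ℝ) < π := Real.pi_pos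
    have hM0 : 0 < M := by
      have : (0:ℝ) < 2 ^ (c:ℝ) + c + 2 + 4 * π * β := by nlinarith
      nlinarith
    refine ⟨M, hM0, ?_⟩
    have main : ∀ x y : ℝ, 0 ≤ x → x ≤ y → y ≤ 1 →
        ‖f x - f y‖ ≤ M * (y - x) ^ α := by
      intro x y hx0 hxy hy1
      rcases eq_or_lt_of_le hxy with rfl | hlt
      · simp only [sub_self, norm_zero]
        positivity
      have hy0 : 0 < y := lt_of_le_of_lt hx0 hlt
      rcases eq_or_lt_of_le hx0 with h0x | hx0'
      · -- x = 0
        rw [← h0x, hf0, zero_sub, norm_neg, habs y hy0, sub_zero]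
        have h1 : y ^ c ≤ y ^ α := Real.rpow_le_rpow_of_exponent_ge hy0 hy1 hαc
        have h2 : (0:ℝ) < y ^ α := Real.rpow_pos_of_pos hy0 _
        have hAM : A ≤ M := by
          rw [hMdef]
          nlinarith [mul_nonneg hA0.le (sub_nonneg.mpr h2c), mul_nonneg hA0.le hc0.le,
            mul_nonneg hA0.le (show (0:ℝ) ≤ 2 + 4 * π * β by positivity)]
        nlinarith [mul_le_mul_of_nonneg_left h1 hA0.le,
          mul_le_mul_of_nonneg_right hAM h2.le]
      -- now 0 < x < y ≤ 1
      set δ : ℝ := y - x with hδdef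
      have hδ0 : 0 < δ := by rw [hδdef]; linarith
      have hδ1 : δ ≤ 1 := by rw [hδdef]; linarith
      have hδα : 0 < δ ^ α := Real.rpow_pos_of_pos hδ0 _
      have hxc_le : x ^ c ≤ y ^ c := Real.rpow_le_rpow hx0'.le hxy hc0.le
      -- splitting
      have hsplit : ‖f x - f y‖ ≤
          A * x ^ c * ‖Complex.exp ((T x : ℝ) * Complex.I)
            - Complex.exp ((T y : ℝ) * Complex.I)‖ + A * (y ^ c - x ^ c) := by
        rw [hf_eq x hx0', hf_eq y hy0]
        have hdecomp : ((A * x ^ c : ℝ) : ℂ) * Complex.exp ((T x : ℝ) * Complex.I)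
            - ((A * y ^ c : ℝ) : ℂ) * Complex.exp ((T y : ℝ) * Complex.I)
            = ((A * x ^ c : ℝ) : ℂ) * (Complex.exp ((T x : ℝ) * Complex.I)
                - Complex.exp ((T y : ℝ) * Complex.I))
              + (((A * x ^ c : ℝ) : ℂ) - ((A * y ^ c : ℝ) : ℂ))
                * Complex.exp ((T y : ℝ) * Complex.I) := by ring
        rw [hdecomp]
        refine (norm_add_le _ _).trans ?_
        rw [norm_mul, norm_mul, Complex.norm_exp_ofReal_mul_I, mul_one, Complex.norm_real, Real.norm_eq_abs]
        have h1 : |A * x ^ c| = A * x ^ c := abs_of_nonneg (by positivity)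
        have h2 : ‖((A * x ^ c : ℝ) : ℂ) - ((A * y ^ c : ℝ) : ℂ)‖
            = A * (y ^ c - x ^ c) := by
          rw [← Complex.ofReal_sub, Complex.norm_real, Real.norm_eq_abs,
            abs_of_nonpos (by nlinarith : A * x ^ c - A * y ^ c ≤ 0)]
          ring
        rw [h1, h2]
      -- radial estimate
      have hrad : y ^ c - x ^ c ≤ (2 ^ (c:ℝ) + c) * δ ^ α := by
        rcases le_or_gt x δ with hcase | hcase
        · have hy2δ : y ≤ 2 * δ := by rw [hδdef] at *; linarith
          have h1 : y ^ c ≤ (2 * δ) ^ c := Real.rpow_le_rpow hy0.le hy2δ hc0.le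
          have h2 : (2 * δ) ^ c = 2 ^ (c:ℝ) * δ ^ c :=
            Real.mul_rpow (by norm_num) hδ0.le
          have h3 : (0:ℝ) ≤ x ^ c := Real.rpow_nonneg hx0'.le _
          have h4 : δ ^ c ≤ δ ^ α := Real.rpow_le_rpow_of_exponent_ge hδ0 hδ1 hαc
          have h5 : (0:ℝ) < 2 ^ (c:ℝ) := Real.rpow_pos_of_pos (by norm_num) _
          nlinarith
        · obtain ⟨ξ, hξ, heq⟩ := PSaux.rpow_mvt (c := c) hx0' hlt
          have hξ0 : 0 < ξ := lt_trans hx0' hξ.1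
          have hkey : ξ ^ (c - 1) * δ ≤ δ ^ α := by
            rcases le_or_gt 1 c with h1c | h1c
            · have h1 : ξ ^ (c - 1) ≤ 1 :=
                Real.rpow_le_one hξ0.le (by linarith [hξ.2]) (by linarith)
              have h2 : δ ≤ δ ^ α := by
                calc δ = δ ^ (1:ℝ) := (Real.rpow_one δ).symm
                _ ≤ δ ^ α := Real.rpow_le_rpow_of_exponent_ge hδ0 hδ1 hα1.le
              nlinarith [Real.rpow_pos_of_pos hξ0 (c-1)]
            · have h1 : ξ ^ (c - 1) ≤ δ ^ (c - 1) :=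
                Real.rpow_le_rpow_of_nonpos hδ0 (by linarith [hξ.1]) (by linarith)
              have h2 : δ ^ (c - 1) = δ ^ c / δ := by
                rw [Real.rpow_sub hδ0, Real.rpow_one]
              have h3 : δ ^ c ≤ δ ^ α := Real.rpow_le_rpow_of_exponent_ge hδ0 hδ1 hαc
              calc ξ ^ (c - 1) * δ ≤ δ ^ (c - 1) * δ := by nlinarith
              _ = δ ^ c := by rw [h2]; field_simp
              _ ≤ δ ^ α := h3
          have hδeq : y - x = δ := rfl
          rw [hδeq] at heq
          nlinarith [Real.rpow_pos_of_pos (show (0:ℝ) < 2 by norm_num) c]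
      -- angular estimate
      have hang : x ^ c * ‖Complex.exp ((T x : ℝ) * Complex.I)
          - Complex.exp ((T y : ℝ) * Complex.I)‖ ≤ (2 + 4 * π * β) * δ ^ α := by
        rcases le_or_gt (x ^ c) (δ ^ α) with hcase | hcase
        · have h2 := PSaux.chord_le_two (T x) (T y)
          have h3 := norm_nonneg (Complex.exp ((T x : ℝ) * Complex.I)
            - Complex.exp ((T y : ℝ) * Complex.I))
          have h4 : (0:ℝ) ≤ x ^ c := Real.rpow_nonneg hx0'.le _
          nlinarith [mul_le_mul_of_nonneg_left h2 h4,
            mul_pos (mul_pos (show (0:ℝ) < 4 * π by positivity) hβ0) hδα]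
        · have hδx : δ < x ^ (β + 1) := by
            by_contra hcon
            push_neg at hcon
            have h1 := Real.rpow_le_rpow (Real.rpow_nonneg hx0'.le _) hcon hα0.le
            rw [← Real.rpow_mul hx0'.le] at h1
            have hxc : x ^ c = x ^ ((β + 1) * α) := by
              rw [hc]; ring_nf
            rw [← hxc] at h1
            linarith
          obtain ⟨ξ, hξ, heq⟩ := PSaux.rpow_mvt (c := -β) hx0' hlt
          have hξ0 : 0 < ξ := lt_trans hx0' hξ.1
          have hmono : ξ ^ (-β - 1) ≤ x ^ (-β - 1) :=
            Real.rpow_le_rpow_of_nonpos hx0' hξ.1.le (by linarith)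
          have hyx : y ^ (-β) ≤ x ^ (-β) :=
            Real.rpow_le_rpow_of_nonpos hx0' hxy (by linarith)
          have hδeq : y - x = δ := rfl
          rw [hδeq] at heq
          have hsub : x ^ (-β) - y ^ (-β) ≤ β * x ^ (-β - 1) * δ := by
            have h1 : (0:ℝ) ≤ β * δ := by positivity
            nlinarith [mul_le_mul_of_nonneg_left hmono h1]
          have hchord := PSaux.chord_le (T x) (T y)
          have habsT : |T x - T y| = 2 * π * (x ^ (-β) - y ^ (-β)) := by
            have hTd : T x - T y = 2 * π * (x ^ (-β) - y ^ (-β)) := by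
              simp only [hTdef]; ring
            have : (0:ℝ) ≤ 2 * π * (x ^ (-β) - y ^ (-β)) := by nlinarith
            rw [hTd, abs_of_nonneg this]
          -- power juggling
          have hxpow : x ^ c * x ^ (-β - 1) * x ^ ((β + 1) * (1 - α)) = 1 := by
            rw [← Real.rpow_add hx0', ← Real.rpow_add hx0',
              show c + (-β - 1) + (β + 1) * (1 - α) = 0 from by rw [hc]; ring,
              Real.rpow_zero]
          have hδ_eq : δ = δ ^ α * δ ^ (1 - α) := by
            rw [← Real.rpow_add hδ0, show α + (1 - α) = 1 from by ring, Real.rpow_one]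
          have hδ1α : δ ^ (1 - α) ≤ x ^ ((β + 1) * (1 - α)) := by
            calc δ ^ (1 - α) ≤ (x ^ (β + 1)) ^ (1 - α) :=
              Real.rpow_le_rpow hδ0.le hδx.le (by linarith)
            _ = x ^ ((β + 1) * (1 - α)) := (Real.rpow_mul hx0'.le _ _).symm
          have hpos1 : (0:ℝ) < x ^ c := Real.rpow_pos_of_pos hx0' _
          have hpos2 : (0:ℝ) < x ^ (-β - 1) := Real.rpow_pos_of_pos hx0' _
          have hstep : x ^ c * x ^ (-β - 1) * δ ≤ δ ^ α := by
            calc x ^ c * x ^ (-β - 1) * δ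
                = (x ^ c * x ^ (-β - 1) * δ ^ (1 - α)) * δ ^ α := by
                  conv_lhs => rw [hδ_eq]
                  ring
            _ ≤ (x ^ c * x ^ (-β - 1) * x ^ ((β + 1) * (1 - α))) * δ ^ α := by
                  gcongr
            _ = 1 * δ ^ α := by rw [hxpow]
            _ = δ ^ α := one_mul _
          calc x ^ c * ‖Complex.exp ((T x : ℝ) * Complex.I)
              - Complex.exp ((T y : ℝ) * Complex.I)‖
              ≤ x ^ c * (2 * |T x - T y|) :=
                mul_le_mul_of_nonneg_left hchord hpos1.le
          _ = x ^ c * (4 * π * (x ^ (-β) - y ^ (-β))) := by rw [habsT]; ring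
          _ ≤ x ^ c * (4 * π * (β * x ^ (-β - 1) * δ)) :=
                mul_le_mul_of_nonneg_left
                  (mul_le_mul_of_nonneg_left hsub (by positivity)) hpos1.le
          _ = 4 * π * β * (x ^ c * x ^ (-β - 1) * δ) := by ring
          _ ≤ 4 * π * β * δ ^ α :=
                mul_le_mul_of_nonneg_left hstep (by positivity)
          _ ≤ (2 + 4 * π * β) * δ ^ α := by
                rw [add_mul]
                exact le_add_of_nonneg_left (by positivity)
      -- combine
      calc ‖f x - f y‖
          ≤ A * x ^ c * ‖Complex.exp ((T x : ℝ) * Complex.I)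
            - Complex.exp ((T y : ℝ) * Complex.I)‖ + A * (y ^ c - x ^ c) := hsplit
      _ ≤ A * ((2 + 4 * π * β) * δ ^ α) + A * ((2 ^ (c:ℝ) + c) * δ ^ α) :=
            add_le_add
              (le_trans (le_of_eq (mul_assoc A _ _))
                (mul_le_mul_of_nonneg_left hang hA0.le))
              (mul_le_mul_of_nonneg_left hrad hA0.le)
      _ = (A * (2 ^ (c:ℝ) + c + 2 + 4 * π * β)) * δ ^ α := by ring
      _ ≤ (A * (2 ^ (c:ℝ) + c + 2 + 4 * π * β)) * δ ^ α + δ ^ α :=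
            le_add_of_nonneg_right hδα.le
      _ = M * δ ^ α := by rw [hMdef]; ring
    intro x hx y hy
    rcases le_total x y with h | h
    · rw [show |x - y| = y - x from by rw [abs_sub_comm]; exact abs_of_nonneg (by linarith)]
      exact main x y hx.1 h hy.2
    · rw [show |x - y| = x - y from abs_of_nonneg (by linarith),
        show ‖f x - f y‖ = ‖f y - f x‖ from norm_sub_rev _ _]
      exact main y x hy.1 h hx.2

end Reverse


section Forward

open Real Set Filter Finset

lemma PSaux.dist_half_turn (p t : ℝ) (ht : 0 ≤ t) :
    ‖spiralMap (fun u => u ^ (-p)) t - spiralMap (fun u => u ^ (-p)) (t + π)‖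
      = t ^ (-p) + (t + π) ^ (-p) := by
  have h1 : Complex.exp (((t + π : ℝ) : ℂ) * Complex.I)
      = - Complex.exp ((t : ℝ) * Complex.I) := by
    push_cast
    rw [add_mul, Complex.exp_add, Complex.exp_pi_mul_I]
    ring
  show ‖(((t : ℝ) ^ (-p) : ℝ) : ℂ) * Complex.exp ((t : ℝ) * Complex.I)
      - (((t + π : ℝ) ^ (-p) : ℝ) : ℂ) * Complex.exp (((t + π : ℝ) : ℂ) * Complex.I)‖
      = t ^ (-p) + (t + π) ^ (-p)
  rw [h1]
  have h2 : (((t : ℝ) ^ (-p) : ℝ) : ℂ) * Complex.exp ((t : ℝ) * Complex.I)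
      - (((t + π : ℝ) ^ (-p) : ℝ) : ℂ) * (- Complex.exp ((t : ℝ) * Complex.I))
      = (((t : ℝ) ^ (-p) + (t + π : ℝ) ^ (-p) : ℝ) : ℂ) * Complex.exp ((t : ℝ) * Complex.I) := by
    push_cast
    ring
  rw [h2, norm_mul, Complex.norm_real, Real.norm_eq_abs, Complex.norm_exp_ofReal_mul_I, mul_one]
  have hπ := Real.pi_pos
  exact abs_of_nonneg (by positivity)

set_option maxHeartbeats 1000000 in
lemma PSaux.ps_of_holder (p s : ℝ) (hp : 0 < p) (hs : 1 < s)
    (h : IsHolderArc (polySpiral p) (1 / s)) : 1 < p * s := by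
  by_contra hcon
  push_neg at hcon
  obtain ⟨f, hinj, himg, H, hH, hHol⟩ := h
  have hs0 : (0:ℝ) < s := lt_trans one_pos hs
  have hα0 : (0:ℝ) < 1 / s := by positivity
  have hπpos : (0:ℝ) < π := Real.pi_pos
  -- membership description
  have hmem : ∀ z : ℂ, z ∈ polySpiral p ↔
      (∃ t : ℝ, 2 * π ≤ t ∧ spiralMap (fun u => u ^ (-p)) t = z) ∨ z = 0 := by
    intro z
    simp only [polySpiral, spiral, Set.mem_union, Set.mem_image, Set.mem_Ici,
      Set.mem_singleton_iff]
  -- continuity of f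
  have hcont : ContinuousOn f (Set.Icc 0 1) := by
    intro x0 hx0
    have h1 : Tendsto (fun x : ℝ => |x - x0|) (nhdsWithin x0 (Set.Icc 0 1)) (nhds 0) := by
      have h0 : Tendsto (fun x : ℝ => |x - x0|) (nhds x0) (nhds 0) := by
        have hc : Continuous fun x : ℝ => |x - x0| := by fun_prop
        have h0' := hc.tendsto x0
        simpa using h0'
      exact h0.mono_left nhdsWithin_le_nhds
    have h2 : ContinuousAt (fun u : ℝ => u ^ (1/s)) 0 :=
      Real.continuousAt_rpow_const 0 (1/s) (Or.inr hα0.le)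
    have h3 : Tendsto (fun x : ℝ => |x - x0| ^ (1/s)) (nhdsWithin x0 (Set.Icc 0 1))
        (nhds ((0:ℝ) ^ (1/s))) := h2.tendsto.comp h1
    rw [show (0:ℝ) ^ (1/s) = 0 from Real.zero_rpow (ne_of_gt hα0)] at h3
    have htends : Tendsto (fun x : ℝ => H * |x - x0| ^ (1/s))
        (nhdsWithin x0 (Set.Icc 0 1)) (nhds 0) := by
      simpa using h3.const_mul H
    refine tendsto_iff_dist_tendsto_zero.2
      (squeeze_zero' (Filter.Eventually.of_forall fun _ => dist_nonneg) ?_ htends)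
    refine Filter.Eventually.mono self_mem_nhdsWithin fun x hx => ?_
    rw [Complex.dist_eq]
    exact hHol x hx x0 hx0
  -- |f ·| is continuous and injective on [0,1]
  have hχcont : ContinuousOn (fun x => ‖f x‖) (Set.Icc 0 1) :=
    continuous_norm.comp_continuousOn hcont
  have hfmem : ∀ x ∈ Set.Icc (0:ℝ) 1, f x ∈ polySpiral p := by
    intro x hx
    rw [← himg]
    exact Set.mem_image_of_mem f hx
  have hmod : ∀ z ∈ polySpiral p, ∀ w ∈ polySpiral p,
      ‖z‖ = ‖w‖ → z = w := by
    intro z hz w hw hzw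
    rw [hmem] at hz hw
    rcases hz with ⟨t1, ht1, rfl⟩ | rfl
    · rcases hw with ⟨t2, ht2, rfl⟩ | rfl
      · have h1 : (0:ℝ) < t1 := lt_of_lt_of_le (by positivity) ht1
        have h2 : (0:ℝ) < t2 := lt_of_lt_of_le (by positivity) ht2
        rw [PSaux.abs_spiralMap' p h1.le, PSaux.abs_spiralMap' p h2.le] at hzw
        have ht12 : t1 = t2 := by
          by_contra hne
          rcases lt_or_gt_of_ne hne with hlt | hlt
          · have := Real.rpow_lt_rpow_of_neg h1 hlt (by linarith : -p < 0)
            linarith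
          · have := Real.rpow_lt_rpow_of_neg h2 hlt (by linarith : -p < 0)
            linarith
        rw [ht12]
      · exfalso
        have h1 : (0:ℝ) < t1 := lt_of_lt_of_le (by positivity) ht1
        rw [PSaux.abs_spiralMap' p h1.le, norm_zero] at hzw
        exact absurd hzw (ne_of_gt (Real.rpow_pos_of_pos h1 _))
    · rcases hw with ⟨t2, ht2, rfl⟩ | rfl
      · exfalso
        have h2 : (0:ℝ) < t2 := lt_of_lt_of_le (by positivity) ht2
        rw [PSaux.abs_spiralMap' p h2.le, norm_zero] at hzw
        exact absurd hzw.symm (ne_of_gt (Real.rpow_pos_of_pos h2 _))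
      · rfl
  have hχinj : Set.InjOn (fun x => ‖f x‖) (Set.Icc 0 1) := by
    intro a ha b hb hab
    exact hinj ha hb (hmod _ (hfmem a ha) _ (hfmem b hb) hab)
  -- strict monotonicity
  have hmono := ContinuousOn.strictMonoOn_of_injOn_Icc' zero_le_one hχcont hχinj
  -- the half-turn points
  set Q : ℕ → ℂ := fun k => spiralMap (fun u => u ^ (-p)) (2 * π + π * k) with hQdef
  have htk : ∀ k : ℕ, (0:ℝ) < 2 * π + π * k := by
    intro k
    have : (0:ℝ) ≤ π * k := by positivity
    linarith
  have hQmem : ∀ k : ℕ, Q k ∈ polySpiral p := by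
    intro k
    rw [hmem]
    refine Or.inl ⟨2 * π + π * k, ?_, rfl⟩
    have : (0:ℝ) ≤ π * k := by positivity
    linarith
  have hex : ∀ k : ℕ, ∃ x, x ∈ Set.Icc (0:ℝ) 1 ∧ f x = Q k := by
    intro k
    have h1 := hQmem k
    rw [← himg] at h1
    rcases h1 with ⟨x, hx, hfx⟩
    exact ⟨x, hx, hfx⟩
  choose X hX hfX using hex
  have habsQ : ∀ k : ℕ, ‖f (X k)‖ = (2 * π + π * k) ^ (-p) := by
    intro k
    rw [hfX k, hQdef]
    exact PSaux.abs_spiralMap' p (htk k).le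
  have hdec : ∀ k : ℕ, ‖f (X (k + 1))‖ < ‖f (X k)‖ := by
    intro k
    rw [habsQ, habsQ]
    refine Real.rpow_lt_rpow_of_neg (htk k) ?_ (by linarith)
    push_cast
    linarith
  -- distance between consecutive points
  have hdist : ∀ k : ℕ, ‖f (X k) - f (X (k + 1))‖
      = (2 * π + π * k) ^ (-p) + (2 * π + π * k + π) ^ (-p) := by
    intro k
    rw [hfX k, hfX (k + 1), hQdef]
    have harg : (2 * π + π * ((k : ℕ) + 1 : ℕ) : ℝ) = (2 * π + π * k) + π := by
      push_cast
      ring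
    simp only
    rw [harg]
    exact PSaux.dist_half_turn p _ (htk k).le
  -- X is strictly monotone (one way or the other)
  have hXmono : (∀ k : ℕ, X (k + 1) < X k) ∨ (∀ k : ℕ, X k < X (k + 1)) := by
    rcases hmono with hm | hm
    · left
      intro k
      rcases lt_trichotomy (X (k + 1)) (X k) with h1 | h1 | h1
      · exact h1
      · exfalso; have h2 := hdec k; rw [h1] at h2; exact lt_irrefl _ h2
      · exfalso
        have := hm (hX k) (hX (k + 1)) h1
        have := hdec k
        simp only at *
        linarith
    · right
      intro k
      rcases lt_trichotomy (X k) (X (k + 1)) with h1 | h1 | h1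
      · exact h1
      · exfalso; have h2 := hdec k; rw [h1] at h2; exact lt_irrefl _ h2
      · exfalso
        have := hm (hX (k + 1)) (hX k) h1
        have := hdec k
        simp only at *
        linarith
  -- telescoping bound
  have htel : ∀ N : ℕ, ∑ k ∈ Finset.range N, |X k - X (k + 1)| ≤ 1 := by
    intro N
    rcases hXmono with hm | hm
    · have h1 : ∑ k ∈ Finset.range N, |X k - X (k + 1)|
          = ∑ k ∈ Finset.range N, (X k - X (k + 1)) :=
        Finset.sum_congr rfl fun k _ => abs_of_nonneg (by linarith [hm k])
      rw [h1, Finset.sum_range_sub' X N]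
      have := (hX 0).1
      have := (hX 0).2
      have := (hX N).1
      have := (hX N).2
      linarith
    · have h1 : ∑ k ∈ Finset.range N, |X k - X (k + 1)|
          = ∑ k ∈ Finset.range N, (X (k + 1) - X k) :=
        Finset.sum_congr rfl fun k _ => by rw [abs_sub_comm]; exact abs_of_nonneg (by linarith [hm k])
      rw [h1, Finset.sum_range_sub X N]
      have := (hX 0).1
      have := (hX 0).2
      have := (hX N).1
      have := (hX N).2
      linarith
  -- pointwise lower bound on increments
  have hkey : ∀ k : ℕ, 1 / ((k : ℝ) + 1) ≤ 3 * π * H ^ s * |X k - X (k + 1)| := by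
    intro k
    have hB1 : (1:ℝ) ≤ 3 * π * ((k : ℝ) + 1) := by
      have h0 : (0:ℝ) ≤ π * k := by positivity
      have h3 := Real.pi_gt_three
      nlinarith
    have hB0 : (0:ℝ) < 3 * π * ((k : ℝ) + 1) := by positivity
    -- lower bound the distance
    have h1 : (3 * π * ((k : ℝ) + 1)) ^ (-p) ≤ ‖f (X k) - f (X (k + 1))‖ := by
      rw [hdist k]
      have h2 : (3 * π * ((k : ℝ) + 1)) ^ (-p) ≤ (2 * π + π * k + π) ^ (-p) := by
        refine Real.rpow_le_rpow_of_nonpos (by positivity) ?_ (by linarith)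
        have : (0:ℝ) ≤ π * k := by positivity
        nlinarith
      have h3 : (0:ℝ) ≤ (2 * π + π * k) ^ (-p) := Real.rpow_nonneg (htk k).le _
      linarith
    have h3 := hHol (X k) (hX k) (X (k + 1)) (hX (k + 1))
    have h4 : (3 * π * ((k : ℝ) + 1)) ^ (-p) ≤ H * |X k - X (k + 1)| ^ (1/s) :=
      le_trans h1 h3
    -- raise to the power s
    have h5 := Real.rpow_le_rpow (Real.rpow_nonneg hB0.le _) h4 hs0.le
    rw [← Real.rpow_mul hB0.le] at h5
    rw [Real.mul_rpow hH.le (Real.rpow_nonneg (abs_nonneg _) _)] at h5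
    rw [← Real.rpow_mul (abs_nonneg _)] at h5
    rw [show 1 / s * s = 1 from by field_simp, Real.rpow_one] at h5
    -- (3π(k+1))^{-ps} ≥ (3π(k+1))^{-1}
    have h6 : (3 * π * ((k : ℝ) + 1)) ^ (-(1:ℝ))
        ≤ (3 * π * ((k : ℝ) + 1)) ^ (-p * s) := by
      refine Real.rpow_le_rpow_of_exponent_le hB1 ?_
      nlinarith
    rw [Real.rpow_neg_one] at h6
    have h7 : (3 * π * ((k : ℝ) + 1))⁻¹ ≤ H ^ s * |X k - X (k + 1)| := le_trans h6 h5
    have h8 : 1 / ((k : ℝ) + 1) = 3 * π * (3 * π * ((k : ℝ) + 1))⁻¹ := by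
      field_simp
    rw [h8]
    calc 3 * π * (3 * π * ((k : ℝ) + 1))⁻¹
        ≤ 3 * π * (H ^ s * |X k - X (k + 1)|) :=
          mul_le_mul_of_nonneg_left h7 (by positivity)
    _ = 3 * π * H ^ s * |X k - X (k + 1)| := by ring
  -- sum up and contradict divergence of the harmonic series
  have hbound : ∀ N : ℕ, ∑ k ∈ Finset.range N, (1 / ((k : ℝ) + 1)) ≤ 3 * π * H ^ s := by
    intro N
    calc ∑ k ∈ Finset.range N, (1 / ((k : ℝ) + 1))
        ≤ ∑ k ∈ Finset.range N, 3 * π * H ^ s * |X k - X (k + 1)| :=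
          Finset.sum_le_sum fun k _ => hkey k
    _ = 3 * π * H ^ s * ∑ k ∈ Finset.range N, |X k - X (k + 1)| := by
          rw [Finset.mul_sum]
    _ ≤ 3 * π * H ^ s * 1 :=
          mul_le_mul_of_nonneg_left (htel N) (by positivity)
    _ = 3 * π * H ^ s := mul_one _
  obtain ⟨N, hN⟩ := (Filter.tendsto_atTop.mp tendsto_sum_range_one_div_nat_succ_atTop
    (3 * π * H ^ s + 1)).exists
  have := hbound N
  simp only [one_div] at this hN
  linarith

end Forward

/-- For `p > 0` and `s > 1`, the polynomial spiral `S_p` is a `(1/s)`-Hölder arc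
iff `ps > 1`. -/
theorem polySpiral_isHolderArc_iff (p s : ℝ) (hp : 0 < p) (hs : 1 < s) :
    IsHolderArc (polySpiral p) (1 / s) ↔ 1 < p * s := by
  constructor
  · exact PSaux.ps_of_holder p s hp hs
  · exact PSaux.holder_of_ps p s hp hs
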